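/- arXiv:1202.1274 — 3 statements merged into one kernel-verified Lean document; each statement's English description precedes it below -/
import Mathlib

section
/- For any real number a > 0 and any real σ > 0, one has e^{-a} = (1/(2πi)) ∫_{σ-i∞}^{σ+i∞} a^{-t} Γ(t) dt, i.e. the inverse Mellin transform of the Gamma function is the exponential function. -/
open Complex Filter MeasureTheory Set Real

/-- Norm bound for the Gamma function on the right half plane. -/
lemma aux_norm_Gamma_le {s : ℂ} (hs : 0 < s.re) : ‖Complex.Gamma s‖ ≤ Real.Gamma s.re := by
  rw [Complex.Gamma_eq_integral hs, Real.Gamma_eq_integral hs, Complex.GammaIntegral]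
  calc ‖∫ x in Ioi (0:ℝ), (Real.exp (-x) : ℂ) * (x:ℂ) ^ (s - 1)‖
      ≤ ∫ x in Ioi (0:ℝ), ‖(Real.exp (-x) : ℂ) * (x:ℂ) ^ (s - 1)‖ :=
        norm_integral_le_integral_norm _
    _ = ∫ x in Ioi (0:ℝ), Real.exp (-x) * x ^ (s.re - 1) := by
        refine setIntegral_congr_fun measurableSet_Ioi fun x hx => ?_
        rw [norm_mul,
          Complex.norm_cpow_eq_rpow_re_of_pos hx, Complex.norm_real, Real.norm_eq_abs,
          abs_of_pos (Real.exp_pos _)]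
        simp

/-- Continuity of `y ↦ Γ(σ + y i)` for `σ > 0`. -/
lemma aux_continuous_Gamma_vertical {σ : ℝ} (hσ : 0 < σ) :
    Continuous fun y : ℝ => Complex.Gamma ((σ : ℂ) + y * Complex.I) := by
  refine continuous_iff_continuousAt.2 fun y => ?_
  have h : ∀ m : ℕ, (σ : ℂ) + y * Complex.I ≠ -m := by
    intro m hm
    have := congrArg Complex.re hm
    simp at this
    linarith [this, (Nat.cast_nonneg m : (0:ℝ) ≤ m)]
  exact ContinuousAt.comp (g := Complex.Gamma) (f := fun y : ℝ => (σ : ℂ) + y * Complex.I)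
    (x := y) (Complex.differentiableAt_Gamma _ h).continuousAt (by fun_prop)

/-- Integrability of the Gamma function along vertical lines in the right half plane. -/
lemma aux_Gamma_verticalIntegrable {σ : ℝ} (hσ : 0 < σ) :
    Integrable fun y : ℝ => Complex.Gamma ((σ : ℂ) + y * Complex.I) := by
  have hbound : ∀ y : ℝ, ‖Complex.Gamma ((σ : ℂ) + y * Complex.I)‖ ≤
      Real.Gamma (σ + 2) / (σ ^ 2 + y ^ 2) := by
    intro y
    set s : ℂ := (σ : ℂ) + y * Complex.I with hs
    have hre : s.re = σ := by simp [hs]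
    have hs0 : s ≠ 0 := fun h => by rw [h] at hre; simp at hre; linarith
    have hs1 : s + 1 ≠ 0 := fun h => by
      have := congrArg Complex.re h; rw [Complex.add_re, hre] at this; simp at this; linarith
    have key : Complex.Gamma (s + 2) = (s + 1) * (s * Complex.Gamma s) := by
      rw [← Complex.Gamma_add_one s hs0, ← Complex.Gamma_add_one (s + 1) hs1]
      ring_nf
    have hnorm : ‖Complex.Gamma (s + 2)‖ = ‖s + 1‖ * (‖s‖ * ‖Complex.Gamma s‖) := by
      rw [key, norm_mul, norm_mul]
    have hsq : ‖s‖ ^ 2 = σ ^ 2 + y ^ 2 := by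
      rw [Complex.sq_norm, Complex.normSq_apply]; simp [hs]; ring
    have hs_le : ‖s‖ ≤ ‖s + 1‖ := by
      rw [Complex.norm_def, Complex.norm_def]
      apply Real.sqrt_le_sqrt
      simp [Complex.normSq_apply, hs]
      nlinarith
    have hΓ2 : ‖Complex.Gamma (s + 2)‖ ≤ Real.Gamma (σ + 2) := by
      have : (s + 2).re = σ + 2 := by simp [hs]
      rw [← this]
      exact aux_norm_Gamma_le (by rw [this]; linarith)
    have hpos : 0 < σ ^ 2 + y ^ 2 := by positivity
    rw [le_div_iff₀ hpos]
    calc ‖Complex.Gamma s‖ * (σ ^ 2 + y ^ 2) = ‖Complex.Gamma s‖ * ‖s‖ ^ 2 := by rw [hsq]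
      _ = ‖s‖ * (‖s‖ * ‖Complex.Gamma s‖) := by ring
      _ ≤ ‖s + 1‖ * (‖s‖ * ‖Complex.Gamma s‖) := by
          apply mul_le_mul_of_nonneg_right hs_le; positivity
      _ = ‖Complex.Gamma (s + 2)‖ := hnorm.symm
      _ ≤ Real.Gamma (σ + 2) := hΓ2
  have hint : Integrable fun y : ℝ => Real.Gamma (σ + 2) / (σ ^ 2 + y ^ 2) := by
    have h1 : Integrable fun y : ℝ => (1 + (y / σ) ^ 2)⁻¹ :=
      integrable_inv_one_add_sq.comp_div hσ.ne'
    have h2 := (h1.const_mul (Real.Gamma (σ + 2) / σ ^ 2))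
    refine h2.congr ?_
    filter_upwards with y
    have hσ2 : σ ^ 2 ≠ 0 := by positivity
    field_simp
  exact Integrable.mono' hint ((aux_continuous_Gamma_vertical hσ).aestronglyMeasurable)
    (Filter.Eventually.of_forall hbound)

/-- Inverse Mellin transform of the Gamma function: for `a > 0` and `σ > 0`,
`e^{-a} = (1/(2πi)) ∫_{σ-i∞}^{σ+i∞} a^{-t} Γ(t) dt`, understood as the limit of
the contour integrals along `Re t = σ` from `σ - iT` to `σ + iT`. -/
theorem stmt0 (a σ : ℝ) (ha : 0 < a) (hσ : 0 < σ) :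
    Tendsto (fun T : ℝ =>
        (1 / (2 * Real.pi * Complex.I)) *
          ∫ y in (-T)..T, (a : ℂ) ^ (-((σ : ℂ) + y * Complex.I)) *
            Complex.Gamma ((σ : ℂ) + y * Complex.I) * Complex.I)
      atTop (nhds ((Real.exp (-a) : ℝ) : ℂ)) := by
  set f : ℝ → ℂ := fun x => (Real.exp (-x) : ℂ) with hf_def
  set g : ℝ → ℂ := fun y => (a : ℂ) ^ (-((σ : ℂ) + y * Complex.I)) *
      Complex.Gamma ((σ : ℂ) + y * Complex.I) with hg_def
  -- mellin f = Gamma on re > 0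
  have hmf : ∀ s : ℂ, 0 < s.re → mellin f s = Complex.Gamma s := by
    intro s hs
    rw [Complex.Gamma_eq_integral hs, Complex.GammaIntegral, mellin]
    refine setIntegral_congr_fun measurableSet_Ioi fun x hx => ?_
    simp [hf_def, smul_eq_mul, mul_comm]
  -- Integrability of g
  have hgi : Integrable g := by
    have ha' : (0:ℝ) < a := ha
    have : Integrable fun y : ℝ =>
        Complex.Gamma ((σ : ℂ) + y * Complex.I) := aux_Gamma_verticalIntegrable hσ
    refine (this.norm.const_mul ((a : ℝ) ^ (-σ))).mono'
      ?_ ?_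
    · apply Continuous.aestronglyMeasurable
      apply Continuous.mul ?_ (aux_continuous_Gamma_vertical hσ)
      apply Continuous.const_cpow (by fun_prop)
      exact Or.inl (Complex.ofReal_ne_zero.2 ha.ne')
    · filter_upwards with y
      rw [hg_def, norm_mul]
      apply mul_le_mul_of_nonneg_right _ (norm_nonneg _)
      rw [Complex.norm_cpow_eq_rpow_re_of_pos ha]
      simp
  -- value of the full integral via Mellin inversion
  have hconv : MellinConvergent f σ := by
    refine (Complex.GammaIntegral_convergent (s := (σ:ℂ)) (by simpa using hσ)).congr_fun
      ?_ measurableSet_Ioi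
    intro x hx
    simp [hf_def, smul_eq_mul, mul_comm]
  have hFf : Complex.VerticalIntegrable (mellin f) σ := by
    refine (aux_Gamma_verticalIntegrable hσ).congr ?_
    filter_upwards with y
    exact (hmf _ (by simp [hσ])).symm
  have hinv := mellinInv_mellin_eq σ f ha hconv hFf (by fun_prop)
  have hval : (1 / (2 * (Real.pi:ℂ))) * ∫ y : ℝ, g y = ((Real.exp (-a) : ℝ) : ℂ) := by
    have : mellinInv σ (mellin f) a = (1 / (2 * (Real.pi:ℂ))) * ∫ y : ℝ, g y := by
      rw [mellinInv, Complex.real_smul]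
      push_cast
      congr 1
      refine integral_congr_ae (Filter.Eventually.of_forall fun y => ?_)
      show (a:ℂ) ^ (-((σ:ℂ) + y * Complex.I)) • mellin f ((σ:ℂ) + y * Complex.I) = g y
      rw [smul_eq_mul, hmf _ (by simp [hσ])]
    rw [← this, hinv, hf_def]
  -- limit of truncated integrals
  have htend : Tendsto (fun T : ℝ => ∫ y in (-T)..T, g y) atTop (nhds (∫ y : ℝ, g y)) :=
    intervalIntegral_tendsto_integral hgi tendsto_neg_atTop_atBot tendsto_id
  have heq : ∀ T : ℝ, (1 / (2 * Real.pi * Complex.I)) *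
      ∫ y in (-T)..T, g y * Complex.I
      = (1 / (2 * (Real.pi:ℂ))) * ∫ y in (-T)..T, g y := by
    intro T
    rw [intervalIntegral.integral_mul_const]
    have hI : Complex.I ≠ 0 := Complex.I_ne_zero
    have hπ : (Real.pi : ℂ) ≠ 0 := Complex.ofReal_ne_zero.2 Real.pi_ne_zero
    field_simp
  have := (htend.const_mul ((1 : ℂ) / (2 * (Real.pi:ℂ))))
  rw [hval] at this
  refine this.congr fun T => ?_
  exact (heq T).symm
end

section
/- Let (E_i)_{i≥0} be as above with minimum E₀, β > 0, V > 0, and define ρ(z) := (1/V) Σ_i 1/(z^{-1}e^{βE_i} - 1) for 0 < z < e^{βE₀}. Then for any 0 < z₂ < z₁ < e^{βE₀}: ρ(z₂)/z₂ ≤ (ρ(z₁) - ρ(z₂))/(z₁ - z₂) ≤ ρ(z₁)/(z₁(1 - z₁ e^{-βE₀})). -/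
/-- Convexity inequality for the Bose gas density `ρ(z) = (1/V) Σ_i 1/(z⁻¹e^{βE_i}-1)`:
for `0 < z₂ < z₁ < e^{βE₀}`,
`ρ(z₂)/z₂ ≤ (ρ(z₁)-ρ(z₂))/(z₁-z₂) ≤ ρ(z₁)/(z₁(1-z₁e^{-βE₀}))`. -/
theorem stmt8 (E : ℕ → ℝ) (h0 : 0 ≤ E 0) (hmono : Monotone E) (β V : ℝ) (hβ : 0 < β)
    (hV : 0 < V) (htrace : Summable fun i => Real.exp (-β * E i))
    (z₁ z₂ : ℝ) (h2 : 0 < z₂) (h21 : z₂ < z₁) (h1 : z₁ < Real.exp (β * E 0))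
    (ρ : ℝ → ℝ)
    (hρ : ∀ z : ℝ, ρ z = (1 / V) * ∑' i : ℕ, (z⁻¹ * Real.exp (β * E i) - 1)⁻¹) :
    ρ z₂ / z₂ ≤ (ρ z₁ - ρ z₂) / (z₁ - z₂) ∧
    (ρ z₁ - ρ z₂) / (z₁ - z₂) ≤ ρ z₁ / (z₁ * (1 - z₁ * Real.exp (-β * E 0))) := by
  set a : ℕ → ℝ := fun i => Real.exp (β * E i) with ha
  have hapos : ∀ i, 0 < a i := fun i => Real.exp_pos _
  have ha0 : ∀ i, a 0 ≤ a i := fun i =>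
    Real.exp_le_exp.2 (mul_le_mul_of_nonneg_left (hmono (Nat.zero_le i)) hβ.le)
  have hz1 : 0 < z₁ := h2.trans h21
  have hlt1 : ∀ i, z₁ < a i := fun i => lt_of_lt_of_le h1 (ha0 i)
  have hlt2 : ∀ i, z₂ < a i := fun i => h21.trans (hlt1 i)
  -- rewrite the summand
  have hterm : ∀ z : ℝ, 0 < z → ∀ i, (z⁻¹ * a i - 1)⁻¹ = z / (a i - z) := by
    intro z hz i
    rw [show z⁻¹ * a i - 1 = (a i - z) / z by field_simp, inv_div]
  have hexpneg : ∀ i, Real.exp (-β * E i) = (a i)⁻¹ := by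
    intro i; rw [neg_mul, Real.exp_neg]
  -- summability
  have hsum : ∀ z : ℝ, 0 < z → z < a 0 →
      Summable (fun i => z / (a i - z)) := by
    intro z hz hza
    refine Summable.of_nonneg_of_le (f := fun i => (z * a 0 / (a 0 - z)) * (a i)⁻¹)
      (fun i => ?_) (fun i => ?_) ?_
    · exact div_nonneg hz.le (by linarith [ha0 i] : (0:ℝ) ≤ a i - z)
    · show z / (a i - z) ≤ z * a 0 / (a 0 - z) * (a i)⁻¹
      rw [div_le_iff₀ (by linarith [ha0 i] : (0:ℝ) < a i - z), div_mul_eq_mul_div,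
        div_mul_eq_mul_div, le_div_iff₀ (sub_pos.2 hza)]
      have hb : a 0 * (a i)⁻¹ ≤ 1 := by
        rw [← div_eq_mul_inv]; exact (div_le_one (hapos i)).2 (ha0 i)
      have hce : z * a 0 * (a i)⁻¹ * a i = z * a 0 := by
        field_simp [(hapos i).ne']
      nlinarith [mul_le_mul_of_nonneg_left hb (mul_pos hz hz).le, hce]
    · have htrace' : Summable fun i => (a i)⁻¹ := by
        simpa [ha, neg_mul, Real.exp_neg] using htrace
      exact htrace'.mul_left (z * a 0 / (a 0 - z))
  have hsum1 : Summable (fun i => z₁ / (a i - z₁)) := hsum z₁ hz1 h1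
  have hsum2 : Summable (fun i => z₂ / (a i - z₂)) := hsum z₂ h2 (h21.trans h1)
  set S₁ := ∑' i, z₁ / (a i - z₁) with hS1
  set S₂ := ∑' i, z₂ / (a i - z₂) with hS2
  have hρ1 : ρ z₁ = (1 / V) * S₁ := by
    rw [hρ z₁, hS1]; congr 1; exact tsum_congr (fun i => hterm z₁ hz1 i)
  have hρ2 : ρ z₂ = (1 / V) * S₂ := by
    rw [hρ z₂, hS2]; congr 1; exact tsum_congr (fun i => hterm z₂ h2 i)
  have hS1nn : 0 ≤ S₁ := tsum_nonneg (fun i => div_nonneg hz1.le (sub_pos.2 (hlt1 i)).le)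
  have hS2nn : 0 ≤ S₂ := tsum_nonneg (fun i => div_nonneg h2.le (sub_pos.2 (hlt2 i)).le)
  have hd : ∀ i, 0 < a i - z₁ := fun i => sub_pos.2 (hlt1 i)
  have hd2 : ∀ i, 0 < a i - z₂ := fun i => sub_pos.2 (hlt2 i)
  -- key sum inequality 1 : z₁ * S₂ ≤ z₂ * S₁
  have key1 : z₁ * S₂ ≤ z₂ * S₁ := by
    rw [hS1, hS2, ← tsum_mul_left, ← tsum_mul_left]
    apply Summable.tsum_le_tsum _ (hsum2.mul_left z₁) (hsum1.mul_left z₂)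
    intro i
    rw [mul_div_assoc', mul_div_assoc', div_le_div_iff₀ (hd2 i) (hd i)]
    nlinarith [mul_pos (mul_pos hz1 h2) (sub_pos.2 h21)]
  -- key sum inequality 2 : S₁ * (z₂ - z₁^2 * (a 0)⁻¹) ≤ S₂ * (z₁ * (1 - z₁ * (a 0)⁻¹))
  have ha0inv : 0 < (a 0)⁻¹ := inv_pos.2 (hapos 0)
  have key2 : S₁ * (z₂ - z₁^2 * (a 0)⁻¹) ≤ S₂ * (z₁ * (1 - z₁ * (a 0)⁻¹)) := by
    rw [hS1, hS2, ← tsum_mul_right, ← tsum_mul_right]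
    apply Summable.tsum_le_tsum _ (hsum1.mul_right _) (hsum2.mul_right _)
    intro i
    rw [div_mul_eq_mul_div, div_mul_eq_mul_div, div_le_div_iff₀ (hd i) (hd2 i)]
    have h1' : 1 ≤ (a 0)⁻¹ * a i := by
      rw [← div_le_iff₀ (hapos i), one_div] at *
      exact inv_anti₀ (hapos 0) (ha0 i)
    have hkey : 0 ≤ z₁ * (z₁ - z₂) * (z₁ * ((a 0)⁻¹ * a i) - z₂) :=
      mul_nonneg (mul_nonneg hz1.le (sub_pos.2 h21).le)
        (by nlinarith [mul_le_mul_of_nonneg_left h1' hz1.le])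
    nlinarith [hkey]
  have hden : 0 < 1 - z₁ * Real.exp (-β * E 0) := by
    rw [hexpneg 0]
    have : z₁ * (a 0)⁻¹ < 1 := by
      rw [← div_eq_mul_inv]; exact (div_lt_one (hapos 0)).2 h1
    linarith
  have hVinv : (0:ℝ) < 1 / V := by positivity
  constructor
  · rw [div_le_div_iff₀ h2 (sub_pos.2 h21), hρ1, hρ2]
    nlinarith [mul_le_mul_of_nonneg_left key1 hVinv.le]
  · rw [hρ1, hρ2, hexpneg 0, div_le_div_iff₀ (sub_pos.2 h21)
      (by nlinarith [hden, hexpneg 0] : (0:ℝ) < z₁ * (1 - z₁ * (a 0)⁻¹))]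
    nlinarith [mul_le_mul_of_nonneg_left key2 hVinv.le]
end

section
/- With notation as in the previous statement, for each m ∈ ℕ₀ define ρ^{m+}(z) := (1/V) Σ_{i > m} 1/(z^{-1}e^{βE_i} - 1). Then for any 0 < z₂ < z₁ < e^{βE₀}: ρ^{m+}(z₂)/z₂ ≤ (ρ^{m+}(z₁) - ρ^{m+}(z₂))/(z₁ - z₂) ≤ ρ^{m+}(z₁)/(z₁(1 - z₁ e^{-βE_m})). -/
set_option maxHeartbeats 1000000

/-- Convexity inequality for the occupation density above the `(m+1)`-th eigenvalue,
`ρ^{m+}(z) = (1/V) Σ_{i>m} 1/(z⁻¹e^{βE_i}-1)`: for `0 < z₂ < z₁ < e^{βE₀}`,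
`ρ^{m+}(z₂)/z₂ ≤ (ρ^{m+}(z₁)-ρ^{m+}(z₂))/(z₁-z₂) ≤ ρ^{m+}(z₁)/(z₁(1-z₁e^{-βE_m}))`. -/
theorem stmt9 (E : ℕ → ℝ) (h0 : 0 ≤ E 0) (hmono : Monotone E) (β V : ℝ) (hβ : 0 < β)
    (hV : 0 < V) (htrace : ∀ b : ℝ, 0 < b → Summable fun i => Real.exp (-b * E i))
    (m : ℕ)
    (z₁ z₂ : ℝ) (h2 : 0 < z₂) (h21 : z₂ < z₁) (h1 : z₁ < Real.exp (β * E 0))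
    (ρm : ℝ → ℝ)
    (hρm : ∀ z : ℝ, ρm z =
      (1 / V) * ∑' i : ℕ, if m < i then (z⁻¹ * Real.exp (β * E i) - 1)⁻¹ else 0) :
    ρm z₂ / z₂ ≤ (ρm z₁ - ρm z₂) / (z₁ - z₂) ∧
    (ρm z₁ - ρm z₂) / (z₁ - z₂) ≤ ρm z₁ / (z₁ * (1 - z₁ * Real.exp (-β * E m))) := by
  set a0 : ℝ := Real.exp (β * E 0) with ha0
  have h1p : 0 < z₁ := h2.trans h21
  have ha0p : 0 < a0 := Real.exp_pos _
  -- a i ≥ a0 for all i, a i ≥ am for i > m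
  set a : ℕ → ℝ := fun i => Real.exp (β * E i) with ha
  have hai : ∀ i, a0 ≤ a i := fun i =>
    Real.exp_le_exp.2 (by have := hmono (Nat.zero_le i); nlinarith)
  have ham : ∀ i, m < i → a m ≤ a i := fun i hi =>
    Real.exp_le_exp.2 (by have := hmono hi.le; nlinarith)
  have hamp : z₁ < a m := lt_of_lt_of_le h1 (hai m)
  have hap : ∀ i, z₁ < a i := fun i => lt_of_lt_of_le h1 (hai i)
  -- g z i
  set g : ℝ → ℕ → ℝ := fun z i => if m < i then (z⁻¹ * a i - 1)⁻¹ else 0 with hg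
  have gform : ∀ z : ℝ, 0 < z → ∀ i, m < i → g z i = z / (a i - z) := by
    intro z hz i hi
    simp only [hg, if_pos hi]
    rw [show z⁻¹ * a i - 1 = (a i - z) / z by field_simp, inv_div]
  -- summability
  have hsumm : ∀ z : ℝ, 0 < z → z < a0 → Summable (g z) := by
    intro z hz hza
    have hC : 0 ≤ z / (1 - z / a0) := by
      apply div_nonneg hz.le
      have : z / a0 < 1 := (div_lt_one ha0p).2 hza
      linarith
    have h1z : 0 < 1 - z / a0 := by
      have : z / a0 < 1 := (div_lt_one ha0p).2 hza
      linarith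
    refine Summable.of_nonneg_of_le ?_ ?_ ((htrace β hβ).mul_left (z / (1 - z / a0)))
    · intro i
      by_cases hi : m < i
      · rw [gform z hz i hi]
        exact div_nonneg hz.le (by have := lt_of_lt_of_le hza (hai i); linarith)
      · simp [hg, hi]
    · intro i
      by_cases hi : m < i
      · rw [gform z hz i hi]
        have hexp : Real.exp (-β * E i) = (a i)⁻¹ := by
          rw [ha]; rw [← Real.exp_neg]; ring_nf
        rw [hexp]
        have hai' := hai i
        have haip : (0:ℝ) < a i := lt_of_lt_of_le ha0p hai'
        have hzai : z < a i := lt_of_lt_of_le hza hai'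
        have heq : z / (1 - z / a0) * (a i)⁻¹ = z / ((1 - z / a0) * a i) := by
          field_simp
        rw [heq]
        have key : (1 - z / a0) * a i ≤ a i - z := by
          have hz' : z ≤ z / a0 * a i := by
            rw [div_mul_eq_mul_div, le_div_iff₀ ha0p]
            nlinarith [hai i]
          nlinarith
        gcongr
      · simp only [hg, if_neg hi]
        positivity
  have hs1 : Summable (g z₁) := hsumm z₁ h1p h1
  have hs2 : Summable (g z₂) := hsumm z₂ h2 (h21.trans h1)
  set S : ℝ → ℝ := fun z => ∑' i, g z i with hS
  have hρ : ∀ z, ρm z = (1 / V) * S z := hρm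
  have TA : z₁ * S z₂ ≤ z₂ * S z₁ := by
    rw [hS, ← tsum_mul_left, ← tsum_mul_left]
    refine Summable.tsum_le_tsum ?_ (hs2.mul_left _) (hs1.mul_left _)
    intro i
    by_cases hi : m < i
    · rw [gform z₁ h1p i hi, gform z₂ h2 i hi]
      have hap' := hap i
      rw [← mul_div_assoc, ← mul_div_assoc, div_le_div_iff₀ (by linarith) (by linarith)]
      nlinarith [mul_pos h1p h2]
    · simp [hg, hi]
  set c : ℝ := z₁ * Real.exp (-β * E m) with hc
  have hcm : Real.exp (-β * E m) = (a m)⁻¹ := by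
    rw [ha, ← Real.exp_neg]; ring_nf
  have hamp0 : 0 < a m := lt_trans h1p hamp
  have hc1 : c < 1 := by
    rw [hc, hcm, mul_inv_lt_iff₀ hamp0, one_mul]; exact hamp
  have hc0 : 0 < c := by rw [hc]; positivity
  set D : ℝ := z₁ * (1 - c) with hD
  have hDpos : 0 < D := by rw [hD]; nlinarith
  have TB : D * (S z₁ - S z₂) ≤ (z₁ - z₂) * S z₁ := by
    rw [hS, ← Summable.tsum_sub hs1 hs2, ← tsum_mul_left, ← tsum_mul_left]
    refine Summable.tsum_le_tsum ?_ ((hs1.sub hs2).mul_left _) (hs1.mul_left _)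
    intro i
    by_cases hi : m < i
    · rw [gform z₁ h1p i hi, gform z₂ h2 i hi]
      have hap' := hap i
      have hap2 : z₂ < a i := h21.trans hap'
      have u0 : a i - z₁ ≠ 0 := ne_of_gt (by linarith)
      have v0 : a i - z₂ ≠ 0 := ne_of_gt (by linarith)
      have hdiff : z₁ / (a i - z₁) - z₂ / (a i - z₂)
          = a i * (z₁ - z₂) / ((a i - z₁) * (a i - z₂)) := by
        rw [div_sub_div _ _ u0 v0]; congr 1; ring
      rw [hdiff, ← mul_div_assoc, ← mul_div_assoc,
        div_le_div_iff₀ (mul_pos (by linarith) (by linarith)) (by linarith)]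
      have hz1 : z₂ * a m ≤ z₁ * a i := by nlinarith [ham i hi]
      have h2'' : c * a m = z₁ := by
        rw [hc, hcm]; field_simp
      have key : z₂ ≤ c * a i := by
        rw [← mul_le_mul_iff_left₀ hamp0]
        calc z₂ * a m ≤ z₁ * a i := hz1
          _ = c * a i * a m := by rw [← h2'']; ring
      have hkey2 : (1 - c) * a i ≤ a i - z₂ := by nlinarith
      have hz12' : (0:ℝ) < z₁ - z₂ := by linarith
      rw [hD]
      nlinarith [mul_nonneg (mul_nonneg (mul_nonneg h1p.le hz12'.le)
        (sub_pos.2 hap').le) (sub_nonneg.2 hkey2)]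
    · simp [hg, hi]
  have hVpos : (0:ℝ) < 1 / V := by positivity
  have hz12 : (0:ℝ) < z₁ - z₂ := by linarith
  constructor
  · rw [hρ z₁, hρ z₂, div_le_div_iff₀ h2 hz12]
    nlinarith [mul_le_mul_of_nonneg_left TA hVpos.le]
  · rw [hρ z₁, hρ z₂, div_le_div_iff₀ hz12 hDpos]
    nlinarith [mul_le_mul_of_nonneg_left TB hVpos.le]
end
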